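/- Let G be an inverse semigroup with idempotent set E, H ⊆ G a finite subsemigroup closed under the involution with idempotent set E_H, and A the unitization over ℂ of the semigroup algebra MonoidAlgebra ℂ G. Set G_H := { g ∈ G : g* g ∈ H }, for e ∈ E_H set p_e := e · ∏_{f ∈ E_H, e f ≠ e} (1 − f) ∈ A, let Ẽ := { e₀(1−e₁)⋯(1−e_n) ∈ A : e_i ∈ E } \ {0}, G̃ := { g · p ∈ A : g ∈ G, p ∈ Ẽ } \ {0}, and let X_H := { p_e : e ∈ E_H } (the minimal nonzero elements of Ẽ_H := { e₀(1−e₁)⋯(1−e_n) ∈ A : e_i ∈ E_H } \ {0}). Then the map g ↦ g · p_{g* g} is a bijection from G_H onto { t ∈ G̃ : t* t ∈ X_H }. -/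

import Mathlib

/-- An inverse semigroup: a semigroup with an involution `g ↦ g*` such that
`g** = g`, `(gh)* = h* g*`, `g g* g = g`, and any two idempotents commute. -/
class InverseSemigroup (G : Type*) extends Semigroup G, Star G where
  star_star : ∀ g : G, star (star g) = g
  star_mul : ∀ g h : G, star (g * h) = star h * star g
  mul_star_mul_self : ∀ g : G, g * star g * g = g
  idem_mul_comm : ∀ e f : G, e * e = e → f * f = f → e * f = f * e

/-- The canonical image of `g : G` in the unitization over `ℂ` of the semigroup
algebra `MonoidAlgebra ℂ G`. -/
noncomputable def sgBasis {G : Type*} [InverseSemigroup G] (g : G) :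
    Unitization ℂ (MonoidAlgebra ℂ G) :=
  Unitization.inr (MonoidAlgebra.single g (1 : ℂ))

/-- The conjugate-linear involution on the unitization of the semigroup algebra
extending `g ↦ g*`. -/
noncomputable def astar {G : Type*} [InverseSemigroup G]
    (x : Unitization ℂ (MonoidAlgebra ℂ G)) : Unitization ℂ (MonoidAlgebra ℂ G) :=
  Unitization.inl (starRingEnd ℂ x.fst) +
    Unitization.inr
      (MonoidAlgebra.ofCoeff (Finsupp.mapDomain (star : G → G)
        (Finsupp.mapRange (starRingEnd ℂ) (map_zero _) x.snd.coeff)))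

/-- The set `Ẽ` of nonzero elements of the form `e₀ (1-e₁) ⋯ (1-eₙ)`, `eᵢ ∈ E`. -/
def tildeEG (G : Type*) [InverseSemigroup G] : Set (Unitization ℂ (MonoidAlgebra ℂ G)) :=
  {p | p ≠ 0 ∧ ∃ (e₀ : G) (es : List G), e₀ * e₀ = e₀ ∧ (∀ e ∈ es, e * e = e) ∧
    p = sgBasis e₀ * (es.map fun e => 1 - sgBasis e).prod}

/-- The set `G̃` of nonzero elements of the form `g p` with `g ∈ G`, `p ∈ Ẽ`. -/
def tildeG (G : Type*) [InverseSemigroup G] : Set (Unitization ℂ (MonoidAlgebra ℂ G)) :=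
  {t | t ≠ 0 ∧ ∃ (g : G) (p : Unitization ℂ (MonoidAlgebra ℂ G)),
    p ∈ tildeEG G ∧ t = sgBasis g * p}

/-- For a finite subinverse semigroup `H` (given as a finite subset of `G`), the element
`p_e = e ∏_{f ∈ E_H, e f ≠ e} (1 - f)` of the unitization of the semigroup algebra,
where `E_H` is the set of idempotents of `H`. -/
noncomputable def minProjH {G : Type*} [InverseSemigroup G] [DecidableEq G]
    (H : Finset G) (e : G) : Unitization ℂ (MonoidAlgebra ℂ G) :=
  sgBasis e *
    (((H.filter fun f => f * f = f).filter fun f => e * f ≠ e).toList.map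
      fun f => 1 - sgBasis f).prod

namespace SGAux
variable {G : Type*} [InverseSemigroup G]

open InverseSemigroup

lemma star_idem {e : G} (he : e * e = e) : star e = e := by
  have h1 : star e * star e = star e := by
    rw [← InverseSemigroup.star_mul, he]
  have hc := idem_mul_comm e (star e) he h1
  have h2 : e * star e * e = e := mul_star_mul_self e
  have h3 : e * star e = star e := by
    have h3 := mul_star_mul_self (star e)
    rw [InverseSemigroup.star_star] at h3
    rw [← hc, mul_assoc, h1] at h3
    exact h3
  have h2' : star e * e = e := by rwa [h3] at h2
  exact (h3.symm.trans hc).trans h2'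

lemma se_idem (g : G) : (star g * g) * (star g * g) = star g * g := by
  have h := mul_star_mul_self g
  calc (star g * g) * (star g * g) = star g * (g * star g * g) := by simp [mul_assoc]
  _ = star g * g := by rw [h]

lemma mul_se (g : G) : g * (star g * g) = g := by
  have := mul_star_mul_self g
  rw [← mul_assoc, this]

end SGAux

namespace SGAux
variable {G : Type*} [InverseSemigroup G]
open InverseSemigroup Finsupp

noncomputable def mstar (x : MonoidAlgebra ℂ G) : MonoidAlgebra ℂ G :=
  MonoidAlgebra.ofCoeff
    (Finsupp.mapDomain (star : G → G) (Finsupp.mapRange (starRingEnd ℂ) (map_zero _) x.coeff))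

lemma mstar_add (x y : MonoidAlgebra ℂ G) : mstar (x + y) = mstar x + mstar y := by
  unfold mstar
  rw [MonoidAlgebra.coeff_add, Finsupp.mapRange_add (map_add _), Finsupp.mapDomain_add]; rfl

lemma mstar_zero : mstar (0 : MonoidAlgebra ℂ G) = 0 := by
  unfold mstar; simp

lemma mstar_single (g : G) (c : ℂ) :
    mstar (MonoidAlgebra.single g c) = MonoidAlgebra.single (star g) (starRingEnd ℂ c) := by
  unfold mstar
  rw [MonoidAlgebra.coeff_single, Finsupp.mapRange_single, Finsupp.mapDomain_single]; rfl

lemma mstar_smul (c : ℂ) (x : MonoidAlgebra ℂ G) :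
    mstar (c • x) = (starRingEnd ℂ c) • mstar x := by
  unfold mstar
  have : Finsupp.mapRange (starRingEnd ℂ) (map_zero _) (c • x.coeff)
      = (starRingEnd ℂ c) • Finsupp.mapRange (starRingEnd ℂ) (map_zero _) x.coeff := by
    ext a; rw [Finsupp.mapRange_apply, Finsupp.smul_apply, Finsupp.smul_apply, Finsupp.mapRange_apply, smul_eq_mul, smul_eq_mul, map_mul]
  rw [MonoidAlgebra.coeff_smul, this, Finsupp.mapDomain_smul]; rfl

noncomputable def mstarHom : MonoidAlgebra ℂ G →+ MonoidAlgebra ℂ G :=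
  { toFun := mstar, map_zero' := mstar_zero, map_add' := mstar_add }

lemma mstar_finsupp_sum {ι M : Type*} [Zero M] (f : ι →₀ M)
    (g : ι → M → MonoidAlgebra ℂ G) :
    mstar (f.sum g) = f.sum fun a b => mstar (g a b) :=
  map_finsuppSum mstarHom f g

lemma mstar_eq_sum (z : MonoidAlgebra ℂ G) :
    mstar z = z.coeff.sum fun a b => MonoidAlgebra.single (star a) (starRingEnd ℂ b) := by
  conv_lhs => rw [← MonoidAlgebra.sum_coeff_single z]
  rw [mstar_finsupp_sum]
  exact Finsupp.sum_congr fun a _ => mstar_single a _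

lemma mstar_mul (x y : MonoidAlgebra ℂ G) : mstar (x * y) = mstar y * mstar x := by
  rw [MonoidAlgebra.mul_def]
  rw [mstar_finsupp_sum]
  simp only [mstar_finsupp_sum, mstar_single, map_mul, InverseSemigroup.star_mul]
  rw [mstar_eq_sum x, mstar_eq_sum y, Finsupp.sum_mul]
  simp only [Finsupp.mul_sum, MonoidAlgebra.single_mul_single]
  rw [Finsupp.sum_comm]
  refine Finsupp.sum_congr fun a₂ _ => Finsupp.sum_congr fun a₁ _ => ?_
  rw [mul_comm (starRingEnd ℂ (y.coeff a₂))]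

end SGAux
namespace SGAux
variable {G : Type*} [InverseSemigroup G]
open InverseSemigroup

abbrev A (G : Type*) [InverseSemigroup G] := Unitization ℂ (MonoidAlgebra ℂ G)

lemma astar_def (x : A G) :
    astar x = Unitization.inl (starRingEnd ℂ x.fst) + Unitization.inr (mstar x.snd) := rfl

lemma fst_astar (x : A G) : (astar x).fst = starRingEnd ℂ x.fst := by
  rw [astar_def]; simp

lemma snd_astar (x : A G) : (astar x).snd = mstar x.snd := by
  rw [astar_def]; simp

lemma fst_sgBasis (g : G) : (sgBasis g).fst = 0 := rfl
lemma snd_sgBasis (g : G) : (sgBasis g).snd = MonoidAlgebra.single g 1 := rfl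

lemma astar_mul (x y : A G) : astar (x * y) = astar y * astar x := by
  refine Unitization.ext ?_ ?_
  · rw [fst_astar, Unitization.fst_mul, Unitization.fst_mul, fst_astar, fst_astar,
      map_mul, mul_comm]
  · rw [snd_astar, Unitization.snd_mul, Unitization.snd_mul, snd_astar, snd_astar,
      fst_astar, fst_astar, mstar_add, mstar_add, mstar_smul, mstar_smul, mstar_mul]
    abel

lemma astar_sgBasis (g : G) : astar (sgBasis g) = sgBasis (star g) := by
  refine Unitization.ext ?_ ?_
  · rw [fst_astar, fst_sgBasis, fst_sgBasis, map_zero]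
  · rw [snd_astar, snd_sgBasis, snd_sgBasis, mstar_single, map_one]

lemma astar_one : astar (1 : A G) = 1 := by
  refine Unitization.ext ?_ ?_
  · rw [fst_astar]; simp
  · rw [snd_astar, Unitization.snd_one, mstar_zero]

lemma astar_sub (x y : A G) : astar (x - y) = astar x - astar y := by
  have hy : (x - y).snd = x.snd + -y.snd := by
    rw [sub_eq_add_neg, Unitization.snd_add, Unitization.snd_neg]
  refine Unitization.ext ?_ ?_
  · simp [fst_astar, sub_eq_add_neg, map_add, map_neg]
  · rw [snd_astar, hy, mstar_add, sub_eq_add_neg, Unitization.snd_add, Unitization.snd_neg,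
      snd_astar, snd_astar]
    congr 1
    have h1 : -y.snd = (-1 : ℂ) • y.snd := by simp
    have h2 : -(mstar y.snd) = (-1 : ℂ) • mstar y.snd := by simp
    rw [h1, h2, mstar_smul]
    simp

lemma astar_one_sub_sgBasis {f : G} (hf : f * f = f) :
    astar (1 - sgBasis f) = 1 - sgBasis f := by
  rw [astar_sub, astar_one, astar_sgBasis, star_idem hf]

lemma sgBasis_mul (g h : G) : sgBasis g * sgBasis h = sgBasis (g * h) := by
  unfold sgBasis
  rw [← Unitization.inr_mul, MonoidAlgebra.single_mul_single, one_mul]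

lemma astar_list_prod (L : List (A G)) :
    astar L.prod = (L.reverse.map astar).prod := by
  induction L with
  | nil => simpa using astar_one
  | cons a L ih =>
    rw [List.prod_cons, astar_mul, ih, List.reverse_cons, List.map_append,
      List.prod_append]
    simp

end SGAux
namespace SGAux
variable {G : Type*} [InverseSemigroup G] [DecidableEq G]
open InverseSemigroup

lemma key (H : Finset G) (hmul : ∀ a ∈ H, ∀ b ∈ H, a * b ∈ H) (g : G) (L : List G)
    (hL : ∀ f ∈ L, f ∈ H ∧ f * f = f ∧ g * f ≠ g) :
    (sgBasis g * (L.map fun f => 1 - sgBasis f).prod).fst = 0 ∧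
    (sgBasis g * (L.map fun f => 1 - sgBasis f).prod).snd.coeff g = 1 ∧
    ∀ h ∈ ((sgBasis g * (L.map fun f => 1 - sgBasis f).prod).snd).coeff.support,
      h = g ∨ ∃ x, x ∈ H ∧ x * x = x ∧ g * x ≠ g ∧ h = g * x := by
  induction L using List.reverseRecOn with
  | nil =>
    refine ⟨by simp [fst_sgBasis], ?_, ?_⟩
    · simp [snd_sgBasis, MonoidAlgebra.coeff_single]
    · intro h hh
      simp only [List.map_nil, List.prod_nil, mul_one, snd_sgBasis, MonoidAlgebra.coeff_single] at hh
      have := Finsupp.support_single_subset hh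
      simp only [Finset.mem_singleton] at this
      exact Or.inl this
  | append_singleton L f ih =>
    obtain ⟨hfH, hff, hgf⟩ := hL f (by simp)
    obtain ⟨ih1, ih2, ih3⟩ := ih (fun f' hf' => hL f' (by simp [hf']))
    set T := sgBasis g * (L.map fun f => 1 - sgBasis f).prod with hT
    have hsplit : sgBasis g * ((L ++ [f]).map fun f => 1 - sgBasis f).prod
        = T - T * sgBasis f := by
      rw [List.map_append, List.prod_append, List.map_singleton, List.prod_singleton,
        ← mul_assoc, mul_sub, mul_one]
    set U := T * sgBasis f with hU
    have hUfst : U.fst = 0 := by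
      rw [hU, Unitization.fst_mul, fst_sgBasis, mul_zero]
    have hUsnd : U.snd = T.snd * MonoidAlgebra.single f 1 := by
      rw [hU, Unitization.snd_mul, ih1, fst_sgBasis, snd_sgBasis]
      simp
    -- support of U.snd
    have hUsupp : ∀ h ∈ U.snd.coeff.support, ∃ h' ∈ T.snd.coeff.support, h = h' * f := by
      intro h hh
      rw [hUsnd] at hh
      have := MonoidAlgebra.support_coeff_mul_subset T.snd (MonoidAlgebra.single f 1) hh
      rw [Finset.mem_mul] at this
      obtain ⟨b, hb, c, hc, hbc⟩ := this
      have hcf : c = f := by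
        have := Finsupp.support_single_subset hc
        simpa using this
      exact ⟨b, hb, by rw [← hbc, hcf]⟩
    -- g not in support of U.snd
    have hgU : U.snd.coeff g = 0 := by
      by_contra hne
      have hg : g ∈ U.snd.coeff.support := Finsupp.mem_support_iff.mpr hne
      obtain ⟨h', hh', hEq⟩ := hUsupp g hg
      rcases ih3 h' hh' with rfl | ⟨x, _, _, _, rfl⟩
      · exact hgf hEq.symm
      · -- g = g * x * f
        apply hgf
        have hge : g = g * (x * f) := by rw [← mul_assoc]; exact hEq
        calc g * f = g * (x * f) * f := by rw [← hge]
        _ = g * (x * (f * f)) := by simp [mul_assoc]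
        _ = g * (x * f) := by rw [hff]
        _ = g := hge.symm
    rw [hsplit]
    refine ⟨?_, ?_, ?_⟩
    · have h1 : (T - U).fst = T.fst - U.fst := by
        rw [sub_eq_add_neg, Unitization.fst_add, Unitization.fst_neg, sub_eq_add_neg]
      rw [h1, ih1, hUfst, sub_zero]
    · have h1 : (T - U).snd = T.snd - U.snd := by
        rw [sub_eq_add_neg, Unitization.snd_add, Unitization.snd_neg, sub_eq_add_neg]
      rw [h1, MonoidAlgebra.coeff_sub, Finsupp.sub_apply, ih2, hgU, sub_zero]
    · intro h hh
      have h1 : (T - U).snd = T.snd - U.snd := by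
        rw [sub_eq_add_neg, Unitization.snd_add, Unitization.snd_neg, sub_eq_add_neg]
      rw [h1, MonoidAlgebra.coeff_sub] at hh
      have := Finsupp.support_sub hh
      rw [Finset.mem_union] at this
      rcases this with hh' | hh'
      · exact ih3 h hh'
      · obtain ⟨h', hh'', rfl⟩ := hUsupp h hh'
        rcases ih3 h' hh'' with rfl | ⟨x, hxH, hxx, hgx, rfl⟩
        · exact Or.inr ⟨f, hfH, hff, hgf, rfl⟩
        · refine Or.inr ⟨x * f, hmul x hxH f hfH, ?_, ?_, by rw [mul_assoc]⟩
          · have hcomm : x * f = f * x := idem_mul_comm x f hxx hff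
            calc (x * f) * (x * f) = x * (f * x) * f := by simp [mul_assoc]
            _ = x * (x * f) * f := by rw [← hcomm]
            _ = (x * x) * (f * f) := by simp [mul_assoc]
            _ = x * f := by rw [hxx, hff]
          · intro hEq
            apply hgf
            have hge : g * (x * f) = g := hEq
            calc g * f = g * (x * f) * f := by rw [hge]
            _ = g * (x * (f * f)) := by simp [mul_assoc]
            _ = g * (x * f) := by rw [hff]
            _ = g := hge

end SGAux
namespace SGAux
variable {G : Type*} [InverseSemigroup G]
open InverseSemigroup

noncomputable def XP (L : List G) : A G := (L.map fun f => 1 - sgBasis f).prod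

lemma commute_sgBasis_idem {e f : G} (he : e * e = e) (hf : f * f = f) :
    Commute (sgBasis e) (sgBasis f) := by
  unfold Commute SemiconjBy
  rw [sgBasis_mul, sgBasis_mul, idem_mul_comm e f he hf]

lemma commute_sgBasis_one_sub {e f : G} (he : e * e = e) (hf : f * f = f) :
    Commute (sgBasis e) (1 - sgBasis f) :=
  (Commute.one_right _).sub_right (commute_sgBasis_idem he hf)

lemma commute_one_sub_one_sub {e f : G} (he : e * e = e) (hf : f * f = f) :
    Commute (1 - sgBasis e) (1 - sgBasis f) :=
  ((Commute.one_left _).sub_left (commute_sgBasis_one_sub he hf))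

lemma commute_sgBasis_XP {e : G} (he : e * e = e) {L : List G} (hL : ∀ f ∈ L, f * f = f) :
    Commute (sgBasis e) (XP L) := by
  apply Commute.list_prod_right
  intro x hx
  rw [List.mem_map] at hx
  obtain ⟨f, hf, rfl⟩ := hx
  exact commute_sgBasis_one_sub he (hL f hf)

lemma commute_one_sub_XP {e : G} (he : e * e = e) {L : List G} (hL : ∀ f ∈ L, f * f = f) :
    Commute (1 - sgBasis e) (XP L) := by
  apply Commute.list_prod_right
  intro x hx
  rw [List.mem_map] at hx
  obtain ⟨f, hf, rfl⟩ := hx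
  exact commute_one_sub_one_sub he (hL f hf)

lemma one_sub_idem {f : G} (hf : f * f = f) :
    (1 - sgBasis f) * (1 - sgBasis f) = 1 - sgBasis f := by
  rw [mul_sub, sub_mul, sub_mul, one_mul, one_mul, mul_one, sgBasis_mul, hf]
  abel

lemma XP_idem {L : List G} (hL : ∀ f ∈ L, f * f = f) : XP L * XP L = XP L := by
  induction L with
  | nil => simp [XP]
  | cons f L ih =>
    have hf := hL f (by simp)
    have hL' : ∀ f ∈ L, f * f = f := fun f hf => hL f (by simp [hf])
    have hcomm := commute_one_sub_XP hf hL'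
    have : XP (f :: L) = (1 - sgBasis f) * XP L := by
      simp [XP]
    rw [this]
    calc (1 - sgBasis f) * XP L * ((1 - sgBasis f) * XP L)
        = (1 - sgBasis f) * (XP L * (1 - sgBasis f)) * XP L := by simp [mul_assoc]
    _ = (1 - sgBasis f) * ((1 - sgBasis f) * XP L) * XP L := by rw [← hcomm.eq]
    _ = ((1 - sgBasis f) * (1 - sgBasis f)) * (XP L * XP L) := by simp [mul_assoc]
    _ = (1 - sgBasis f) * XP L := by rw [one_sub_idem hf, ih hL']

lemma astar_XP {L : List G} (hL : ∀ f ∈ L, f * f = f) : astar (XP L) = XP L := by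
  induction L with
  | nil => simpa [XP] using astar_one
  | cons f L ih =>
    have hf := hL f (by simp)
    have hL' : ∀ f ∈ L, f * f = f := fun f hf => hL f (by simp [hf])
    have h1 : XP (f :: L) = (1 - sgBasis f) * XP L := by simp [XP]
    rw [h1, astar_mul, ih hL', astar_one_sub_sgBasis hf, ← (commute_one_sub_XP hf hL').eq]

lemma form_astar {e₀ : G} (he₀ : e₀ * e₀ = e₀) {L : List G} (hL : ∀ f ∈ L, f * f = f) :
    astar (sgBasis e₀ * XP L) = sgBasis e₀ * XP L := by
  rw [astar_mul, astar_XP hL, astar_sgBasis, star_idem he₀, ← (commute_sgBasis_XP he₀ hL).eq]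

lemma form_idem {e₀ : G} (he₀ : e₀ * e₀ = e₀) {L : List G} (hL : ∀ f ∈ L, f * f = f) :
    (sgBasis e₀ * XP L) * (sgBasis e₀ * XP L) = sgBasis e₀ * XP L := by
  have hcomm := commute_sgBasis_XP he₀ hL
  calc sgBasis e₀ * XP L * (sgBasis e₀ * XP L)
      = sgBasis e₀ * (XP L * sgBasis e₀) * XP L := by simp [mul_assoc]
  _ = sgBasis e₀ * (sgBasis e₀ * XP L) * XP L := by rw [← hcomm.eq]
  _ = (sgBasis e₀ * sgBasis e₀) * (XP L * XP L) := by simp [mul_assoc]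
  _ = sgBasis e₀ * XP L := by rw [sgBasis_mul, he₀, XP_idem hL]

lemma form_commute {a e₀ : G} (ha : a * a = a) (he₀ : e₀ * e₀ = e₀) {L : List G}
    (hL : ∀ f ∈ L, f * f = f) : Commute (sgBasis a) (sgBasis e₀ * XP L) :=
  (commute_sgBasis_idem ha he₀).mul_right (commute_sgBasis_XP ha hL)

lemma form_fst (e₀ : G) (L : List G) : (sgBasis e₀ * XP L).fst = 0 := by
  rw [Unitization.fst_mul, fst_sgBasis, zero_mul]

lemma astar_mul_self (g : G) (p : A G) (hp : astar p = p) (hpp : p * p = p)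
    (hcomm : Commute (sgBasis (star g * g)) p) :
    astar (sgBasis g * p) * (sgBasis g * p) = sgBasis (star g * g) * p := by
  rw [astar_mul, astar_sgBasis, hp]
  calc p * sgBasis (star g) * (sgBasis g * p)
      = p * (sgBasis (star g) * sgBasis g) * p := by simp [mul_assoc]
  _ = p * sgBasis (star g * g) * p := by rw [sgBasis_mul]
  _ = sgBasis (star g * g) * p * p := by rw [← hcomm.eq]
  _ = sgBasis (star g * g) * p := by rw [mul_assoc, hpp]

end SGAux

namespace SGAux
variable {G : Type*} [InverseSemigroup G] [DecidableEq G]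
open InverseSemigroup

noncomputable def FL (H : Finset G) (e : G) : List G :=
  ((H.filter fun f => f * f = f).filter fun f => e * f ≠ e).toList

lemma FL_mem {H : Finset G} {e f : G} :
    f ∈ FL H e ↔ f ∈ H ∧ f * f = f ∧ e * f ≠ e := by
  simp [FL, Finset.mem_toList, Finset.mem_filter, and_assoc]

lemma FL_idem {H : Finset G} {e : G} : ∀ f ∈ FL H e, f * f = f :=
  fun _ hf => (FL_mem.mp hf).2.1

lemma minProjH_eq (H : Finset G) (e : G) : minProjH H e = sgBasis e * XP (FL H e) := rfl

lemma ne_zero_of_snd {x : A G} {g : G} (h : x.snd.coeff g = 1) : x ≠ 0 := by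
  intro h0
  rw [h0] at h
  simp at h

lemma key_minProj (H : Finset G) (hmul : ∀ a ∈ H, ∀ b ∈ H, a * b ∈ H) (e : G) :
    (minProjH H e).fst = 0 ∧ (minProjH H e).snd.coeff e = 1 ∧
    ∀ h ∈ (minProjH H e).snd.coeff.support,
      h = e ∨ ∃ x, x ∈ H ∧ x * x = x ∧ e * x ≠ e ∧ h = e * x :=
  key H hmul e (FL H e) (fun f hf => FL_mem.mp hf)

lemma phi_hyp {H : Finset G} (g : G) :
    ∀ f ∈ FL H (star g * g), f ∈ H ∧ f * f = f ∧ g * f ≠ g := by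
  intro f hf
  obtain ⟨h1, h2, h3⟩ := FL_mem.mp hf
  refine ⟨h1, h2, fun hEq => h3 ?_⟩
  rw [mul_assoc, hEq]

lemma phi_form (H : Finset G) (g : G) :
    sgBasis g * minProjH H (star g * g) = sgBasis g * XP (FL H (star g * g)) := by
  rw [minProjH_eq, ← mul_assoc, sgBasis_mul, mul_se]

lemma key_phi (H : Finset G) (hmul : ∀ a ∈ H, ∀ b ∈ H, a * b ∈ H) (g : G) :
    (sgBasis g * minProjH H (star g * g)).fst = 0 ∧
    (sgBasis g * minProjH H (star g * g)).snd.coeff g = 1 ∧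
    ∀ h ∈ (sgBasis g * minProjH H (star g * g)).snd.coeff.support,
      h = g ∨ ∃ x, x ∈ H ∧ x * x = x ∧ g * x ≠ g ∧ h = g * x := by
  rw [phi_form]
  exact key H hmul g (FL H (star g * g)) (phi_hyp g)

lemma minProjH_astar {H : Finset G} {e : G} (he : e * e = e) :
    astar (minProjH H e) = minProjH H e := by
  rw [minProjH_eq]; exact form_astar he FL_idem

lemma minProjH_idem {H : Finset G} {e : G} (he : e * e = e) :
    minProjH H e * minProjH H e = minProjH H e := by
  rw [minProjH_eq]; exact form_idem he FL_idem

lemma minProjH_commute {H : Finset G} {a e : G} (ha : a * a = a) (he : e * e = e) :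
    Commute (sgBasis a) (minProjH H e) := by
  rw [minProjH_eq]; exact form_commute ha he FL_idem

lemma sgBasis_mul_minProjH {H : Finset G} {e : G} (he : e * e = e) :
    sgBasis e * minProjH H e = minProjH H e := by
  rw [minProjH_eq, ← mul_assoc, sgBasis_mul, he]

lemma snd_sgBasis_mul {a : G} {p : A G} (hp : p.fst = 0) :
    (sgBasis a * p).snd = MonoidAlgebra.single a 1 * p.snd := by
  rw [Unitization.snd_mul, fst_sgBasis, hp, snd_sgBasis]
  simp

end SGAux

open SGAux InverseSemigroup in
/-- The map `g ↦ g p_{g* g}` is a bijection from `G_H = {g : g* g ∈ H}` onto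
`{t ∈ G̃ : t* t ∈ X_H}`, where `X_H = {p_e : e ∈ E_H}`. -/
theorem stmt_16 {G : Type*} [InverseSemigroup G] [DecidableEq G] (H : Finset G)
    (hmul : ∀ a ∈ H, ∀ b ∈ H, a * b ∈ H) (hstar : ∀ a ∈ H, star a ∈ H) :
    Set.BijOn (fun g : G => sgBasis g * minProjH H (star g * g))
      {g : G | star g * g ∈ H}
      {t | t ∈ tildeG G ∧
        astar t * t ∈ {q | ∃ e : G, (e ∈ H ∧ e * e = e) ∧ q = minProjH H e}} := by
  classical
  refine ⟨?_, ?_, ?_⟩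
  · -- MapsTo
    intro g hg
    simp only [Set.mem_setOf_eq] at hg ⊢
    set e := star g * g with he_def
    have he : e * e = e := se_idem g
    have hkey := key_phi H hmul g
    have tne : sgBasis g * minProjH H e ≠ 0 := ne_zero_of_snd hkey.2.1
    have pne : minProjH H e ≠ 0 := ne_zero_of_snd (key_minProj H hmul e).2.1
    have hast : astar (sgBasis g * minProjH H e) * (sgBasis g * minProjH H e)
        = minProjH H e := by
      rw [astar_mul_self g (minProjH H e) (minProjH_astar he) (minProjH_idem he)
        (minProjH_commute he he)]
      exact sgBasis_mul_minProjH he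
    refine ⟨⟨tne, g, minProjH H e, ⟨pne, e, FL H e, he, FL_idem, minProjH_eq H e⟩, rfl⟩,
      e, ⟨hg, he⟩, hast⟩
  · -- InjOn
    intro g hg h hh hEq
    simp only at hEq
    have keyg := key_phi H hmul g
    have keyh := key_phi H hmul h
    -- h in support of LHS
    have hmemh : h ∈ (sgBasis g * minProjH H (star g * g)).snd.coeff.support := by
      rw [hEq]
      exact Finsupp.mem_support_iff.mpr (by rw [keyh.2.1]; exact one_ne_zero)
    have hmemg : g ∈ (sgBasis h * minProjH H (star h * h)).snd.coeff.support := by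
      rw [← hEq]
      exact Finsupp.mem_support_iff.mpr (by rw [keyg.2.1]; exact one_ne_zero)
    rcases keyg.2.2 h hmemh with hcase | ⟨x, hxH, hxx, hgx, hx⟩
    · exact hcase.symm
    rcases keyh.2.2 g hmemg with hcase | ⟨y, hyH, hyy, hhy, hy⟩
    · exact hcase
    exfalso
    apply hgx
    have seg := se_idem g
    have seh := se_idem h
    have hsx : star x = x := star_idem hxx
    have heh : star h * h = (star g * g) * x := by
      rw [hx, InverseSemigroup.star_mul, hsx]
      have cxe : x * (star g * g) = (star g * g) * x := idem_mul_comm x _ hxx seg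
      calc (x * star g) * (g * x) = x * ((star g * g) * x) := by rw [mul_assoc, ← mul_assoc (star g) g x]
      _ = (x * (star g * g)) * x := by rw [← mul_assoc]
      _ = ((star g * g) * x) * x := by rw [cxe]
      _ = (star g * g) * (x * x) := by rw [mul_assoc]
      _ = (star g * g) * x := by rw [hxx]
    have hsy : star y = y := star_idem hyy
    have heg : star g * g = (star h * h) * y := by
      rw [hy, InverseSemigroup.star_mul, hsy]
      have cye : y * (star h * h) = (star h * h) * y := idem_mul_comm y _ hyy seh
      calc (y * star h) * (h * y) = y * ((star h * h) * y) := by rw [mul_assoc, ← mul_assoc (star h) h y]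
      _ = (y * (star h * h)) * y := by rw [← mul_assoc]
      _ = ((star h * h) * y) * y := by rw [cye]
      _ = (star h * h) * (y * y) := by rw [mul_assoc]
      _ = (star h * h) * y := by rw [hyy]
    have h1 : (star g * g) * (star h * h) = star h * h := by
      rw [heh, ← mul_assoc, seg]
    have h2 : (star h * h) * (star g * g) = star g * g := by
      rw [heg, ← mul_assoc, seh]
    have h3 : star h * h = star g * g := by
      rw [← h1, idem_mul_comm _ _ seg seh, h2]
    calc g * x = (g * (star g * g)) * x := by rw [mul_se]
    _ = g * ((star g * g) * x) := by rw [mul_assoc]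
    _ = g * (star h * h) := by rw [← heh]
    _ = g * (star g * g) := by rw [h3]
    _ = g := mul_se g
  · -- SurjOn
    intro t ht
    obtain ⟨⟨tne, g, p, ⟨pne, f₀, fs, hf₀, hfs, hpform⟩, htform⟩, e, ⟨heH, hee⟩, hq⟩ := ht
    have hpform' : p = sgBasis f₀ * XP fs := hpform
    subst hpform'
    have ha : (star g * g) * (star g * g) = star g * g := se_idem g
    have h1 : astar t * t = sgBasis (star g * g) * (sgBasis f₀ * XP fs) := by
      rw [htform]
      exact astar_mul_self g _ (form_astar hf₀ hfs) (form_idem hf₀ hfs)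
        (form_commute ha hf₀ hfs)
    have hE : sgBasis (star g * g) * (sgBasis f₀ * XP fs) = minProjH H e :=
      h1.symm.trans hq
    -- e is in the support of the rhs
    have hesupp : e ∈ (sgBasis (star g * g) * (sgBasis f₀ * XP fs)).snd.coeff.support := by
      rw [hE]
      exact Finsupp.mem_support_iff.mpr
        (by rw [(key_minProj H hmul e).2.1]; exact one_ne_zero)
    have hae : (star g * g) * e = e := by
      rw [snd_sgBasis_mul (form_fst f₀ fs)] at hesupp
      have := MonoidAlgebra.support_coeff_mul_subset _ _ hesupp
      rw [Finset.mem_mul] at this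
      obtain ⟨b, hb, c, hc, hbc⟩ := this
      have hba : b = star g * g := by
        have := Finsupp.support_single_subset hb
        simpa using this
      subst hba
      calc (star g * g) * e = (star g * g) * ((star g * g) * c) := by rw [hbc]
      _ = ((star g * g) * (star g * g)) * c := by rw [← mul_assoc]
      _ = (star g * g) * c := by rw [ha]
      _ = e := hbc
    refine ⟨g * e, ?_, ?_⟩
    · have hg' : star (g * e) * (g * e) = e := by
        rw [InverseSemigroup.star_mul, star_idem hee]
        calc (e * star g) * (g * e) = e * ((star g * g) * e) := by rw [mul_assoc, ← mul_assoc (star g) g e]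
        _ = e * e := by rw [hae]
        _ = e := hee
      simp only [Set.mem_setOf_eq, hg']
      exact heH
    · have hg' : star (g * e) * (g * e) = e := by
        rw [InverseSemigroup.star_mul, star_idem hee]
        calc (e * star g) * (g * e) = e * ((star g * g) * e) := by rw [mul_assoc, ← mul_assoc (star g) g e]
        _ = e * e := by rw [hae]
        _ = e := hee
      simp only
      rw [hg']
      calc sgBasis (g * e) * minProjH H e
          = sgBasis g * (sgBasis e * minProjH H e) := by rw [← sgBasis_mul, mul_assoc]
      _ = sgBasis g * minProjH H e := by rw [sgBasis_mul_minProjH hee]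
      _ = sgBasis g * (sgBasis (star g * g) * (sgBasis f₀ * XP fs)) := by rw [hE]
      _ = (sgBasis g * sgBasis (star g * g)) * (sgBasis f₀ * XP fs) := by rw [mul_assoc]
      _ = sgBasis g * (sgBasis f₀ * XP fs) := by rw [sgBasis_mul, mul_se]
      _ = t := htform.symm
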